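/- Let L and N be positive integers and let I_1 < I_2 < … < I_N be real numbers such that 2·I_k ∈ ℤ for every k, I_k − I_l ∈ ℤ for all k, l (all I_k are integers or all are half-odd-integers), and −(L+N−1)/2 < I_k < (L+N−1)/2 for every k. Then there exists exactly one tuple (λ_1,…,λ_N) ∈ ℝ^N satisfying the logarithmic Bethe equations (1/π)·arctan λ_k = I_k/L − (1/(πL))·∑_{l=1}^N arctan(λ_k − λ_l) for every k = 1,…,N. -/

import Mathlib

open Real Finset

/-! ### Auxiliary definitions and lemmas -/

noncomputable def Gfun (x : ℝ) : ℝ := x * Real.arctan x - Real.log (1 + x ^ 2) / 2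

lemma one_add_sq_pos (x : ℝ) : (0:ℝ) < 1 + x ^ 2 := by positivity

lemma hasDerivAt_Gfun (x : ℝ) : HasDerivAt Gfun (Real.arctan x) x := by
  have h1 : HasDerivAt (fun x : ℝ => x * Real.arctan x)
      (1 * Real.arctan x + x * (1 / (1 + x ^ 2))) x :=
    (hasDerivAt_id x).mul (Real.hasDerivAt_arctan x)
  have h2 : HasDerivAt (fun x : ℝ => 1 + x ^ 2) (2 * x) x := by
    simpa using (hasDerivAt_pow 2 x).const_add 1
  have h3 : HasDerivAt (fun x : ℝ => Real.log (1 + x ^ 2)) (2 * x / (1 + x ^ 2)) x :=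
    h2.log (one_add_sq_pos x).ne'
  have h4 := h1.sub (h3.div_const 2)
  have := (one_add_sq_pos x).ne'
  have h5 : Real.arctan x = 1 * Real.arctan x + x * (1 / (1 + x ^ 2)) - 2 * x / (1 + x ^ 2) / 2 := by
    ring
  rw [h5]
  exact h4

lemma continuous_Gfun : Continuous Gfun := by
  apply Continuous.sub
  · exact continuous_id.mul Real.continuous_arctan
  · exact (Continuous.log (by continuity) (fun x => by positivity)).div_const 2

lemma arctan_le_self' {x : ℝ} (h : 0 ≤ x) : Real.arctan x ≤ x :=
  calc Real.arctan x ≤ Real.tan (Real.arctan x) :=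
        Real.le_tan (by rw [← Real.arctan_zero]; exact Real.arctan_strictMono.monotone h)
          (Real.arctan_lt_pi_div_two x)
  _ = x := Real.tan_arctan x

lemma self_mul_arctan_ge (x : ℝ) : π / 2 * |x| - 1 ≤ x * Real.arctan x := by
  have key : ∀ y : ℝ, 0 ≤ y → π / 2 * y - 1 ≤ y * Real.arctan y := by
    intro y hy
    rcases eq_or_lt_of_le hy with rfl | hy'
    · simp
    · have h1 : Real.arctan y⁻¹ = π / 2 - Real.arctan y := Real.arctan_inv_of_pos hy'
      have h2 : Real.arctan y⁻¹ ≤ y⁻¹ := arctan_le_self' (by positivity)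
      have h3 : y * (π / 2 - Real.arctan y) ≤ y * y⁻¹ := by
        rw [← h1]; exact mul_le_mul_of_nonneg_left h2 hy
      rw [mul_inv_cancel₀ hy'.ne'] at h3
      nlinarith
  rcases le_total 0 x with h | h
  · rw [abs_of_nonneg h]; exact key x h
  · rw [abs_of_nonpos h]
    have := key (-x) (by linarith)
    rw [Real.arctan_neg] at this
    nlinarith

lemma log_one_add_sq_le {a : ℝ} (ha : 1 ≤ a) (x : ℝ) :
    Real.log (1 + x ^ 2) / 2 ≤ Real.log a + (1 + |x|) / a := by
  have h0 : (0:ℝ) < 1 + |x| := by positivity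
  have ha0 : (0:ℝ) < a := by linarith
  have h1 : Real.log (1 + x ^ 2) ≤ 2 * Real.log (1 + |x|) := by
    have : Real.log (1 + x ^ 2) ≤ Real.log ((1 + |x|) ^ 2) := by
      apply Real.log_le_log (by positivity)
      nlinarith [abs_nonneg x, sq_abs x]
    rwa [Real.log_pow, Nat.cast_ofNat] at this
  have h2 : Real.log (1 + |x|) ≤ Real.log a + (1 + |x|) / a := by
    have h3 := Real.log_le_sub_one_of_pos (show (0:ℝ) < (1 + |x|) / a by positivity)
    have h4 : Real.log ((1 + |x|) / a) = Real.log (1 + |x|) - Real.log a :=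
      Real.log_div h0.ne' ha0.ne'
    linarith
  linarith

lemma Gfun_lower {a : ℝ} (ha : 1 ≤ a) (x : ℝ) :
    π / 2 * |x| - (1 + Real.log a) - (1 + |x|) / a ≤ Gfun x := by
  have h1 := self_mul_arctan_ge x
  have h2 := log_one_add_sq_le ha x
  unfold Gfun
  linarith

lemma arctan_mul_nonneg (x y : ℝ) : 0 ≤ (Real.arctan x - Real.arctan y) * (x - y) := by
  rcases lt_trichotomy x y with h | h | h
  · have := Real.arctan_strictMono h
    nlinarith
  · simp [h]
  · have := Real.arctan_strictMono h
    nlinarith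

lemma arctan_mul_pos {x y : ℝ} (h : x ≠ y) :
    0 < (Real.arctan x - Real.arctan y) * (x - y) := by
  rcases lt_or_gt_of_ne h with h' | h'
  · have := Real.arctan_strictMono h'
    nlinarith
  · have := Real.arctan_strictMono h'
    nlinarith

lemma count_sgn {N : ℕ} (k : Fin N) :
    ∑ l : Fin N, (if l < k then (1:ℝ) else if k < l then -1 else 0)
      = 2 * (k:ℕ) + 1 - N := by
  have h1 : ∀ l : Fin N, (if l < k then (1:ℝ) else if k < l then -1 else 0)
      = (if l < k then (1:ℝ) else 0) - (if k < l then 1 else 0) := by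
    intro l
    rcases lt_trichotomy l k with h | h | h
    · simp [h, not_lt_of_gt h]
    · simp [h]
    · simp [h, not_lt_of_gt h, lt_asymm h]
  rw [Finset.sum_congr rfl (fun l _ => h1 l), Finset.sum_sub_distrib]
  rw [Finset.sum_boole, Finset.sum_boole]
  have e1 : univ.filter (fun l : Fin N => l < k) = Finset.Iio k := by ext l; simp
  have e2 : univ.filter (fun l : Fin N => k < l) = Finset.Ioi k := by ext l; simp
  rw [e1, e2, Fin.card_Iio, Fin.card_Ioi]
  have hk : (k:ℕ) + 1 ≤ N := k.isLt
  rw [Nat.cast_sub (by omega), Nat.cast_sub (by omega)]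
  push_cast
  ring

lemma double_sum_swap {N : ℕ} (f : Fin N → Fin N → ℝ) :
    ∑ k, ∑ l, f k l = (∑ k, ∑ l, (f k l + f l k)) / 2 := by
  have h : ∑ k : Fin N, ∑ l : Fin N, f l k = ∑ k : Fin N, ∑ l : Fin N, f k l :=
    Finset.sum_comm
  rw [Finset.sum_congr rfl (fun k _ => Finset.sum_add_distrib), Finset.sum_add_distrib, h]
  ring

lemma half_sgn_bound {N : ℕ} (v : Fin N → ℝ) :
    ∑ k : Fin N, (2 * (k:ℕ) + 1 - (N:ℝ)) / 2 * v k
      ≤ (1/4) * ∑ k, ∑ l, |v k - v l| := by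
  have e0 : ∑ k : Fin N, (2 * (k:ℕ) + 1 - (N:ℝ)) / 2 * v k
      = (∑ k, ∑ l, (if l < k then (1:ℝ) else if k < l then -1 else 0) * v k) / 2 := by
    rw [Finset.sum_div]
    refine Finset.sum_congr rfl fun k _ => ?_
    rw [← count_sgn k, ← Finset.sum_mul]
    ring
  rw [e0, double_sum_swap (fun k l => (if l < k then (1:ℝ) else if k < l then -1 else 0) * v k)]
  have key : ∀ k l : Fin N,
      (if l < k then (1:ℝ) else if k < l then -1 else 0) * v k
        + (if k < l then (1:ℝ) else if l < k then -1 else 0) * v l ≤ |v k - v l| := by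
    intro k l
    rcases lt_trichotomy k l with h | h | h
    · simp only [if_neg (lt_asymm h), if_pos h]
      have := neg_abs_le (v k - v l)
      nlinarith [abs_nonneg (v k - v l)]
    · simp [h, abs_nonneg (v k - v l)]
    · simp only [if_pos h, if_neg (lt_asymm h)]
      have := le_abs_self (v k - v l)
      linarith
  have hle : (∑ k, ∑ l, ((if l < k then (1:ℝ) else if k < l then -1 else 0) * v k
      + (if k < l then (1:ℝ) else if l < k then -1 else 0) * v l))
      ≤ ∑ k, ∑ l, |v k - v l| :=
    Finset.sum_le_sum fun k _ => Finset.sum_le_sum fun l _ => key k l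
  linarith

noncomputable def BFun(L N : ℕ) (Inum : Fin N → ℝ) (lam : Fin N → ℝ) : ℝ :=
  (L : ℝ) * ∑ k, Gfun (lam k) + (∑ k, ∑ l, Gfun (lam k - lam l)) / 2
    - π * ∑ k, Inum k * lam k

lemma BFun_hasDerivAt (L N : ℕ) (Inum lam : Fin N → ℝ) (k : Fin N) (t : ℝ) :
    HasDerivAt (fun s => BFun L N Inum (Function.update lam k s))
      ((L : ℝ) * Real.arctan t
        + ∑ l, (if l = k then 0 else Real.arctan (t - lam l))
        - π * Inum k) t := by
  have hupd : ∀ (s : ℝ) (i : Fin N), Function.update lam k s i = if i = k then s else lam i := by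
    intro s i
    by_cases h : i = k <;> simp [Function.update, h]
  -- piece 1
  have h1 : HasDerivAt (fun s : ℝ => ∑ i, Gfun (Function.update lam k s i))
      (Real.arctan t) t := by
    have : ∀ i ∈ (univ : Finset (Fin N)), HasDerivAt (fun s : ℝ => Gfun (Function.update lam k s i))
        (if i = k then Real.arctan t else 0) t := by
      intro i _
      by_cases h : i = k
      · subst h
        simp only [if_pos rfl]
        exact (hasDerivAt_Gfun t).congr_of_eventuallyEq (by
          filter_upwards with s; rw [hupd]; simp)
      · simp only [if_neg h]
        exact (hasDerivAt_const t (Gfun (lam i))).congr_of_eventuallyEq (by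
          filter_upwards with s; rw [hupd]; simp [h])
    have hsum := HasDerivAt.fun_sum this
    simpa using hsum
  -- piece 3
  have h3 : HasDerivAt (fun s : ℝ => ∑ i, Inum i * Function.update lam k s i)
      (Inum k) t := by
    have : ∀ i ∈ (univ : Finset (Fin N)), HasDerivAt (fun s : ℝ => Inum i * Function.update lam k s i)
        (if i = k then Inum k else 0) t := by
      intro i _
      by_cases h : i = k
      · subst h
        simp only [if_pos rfl]
        exact ((hasDerivAt_id t).const_mul (Inum i)).congr_of_eventuallyEq (by
          filter_upwards with s; rw [hupd]; simp) |>.congr_deriv (by simp)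
      · simp only [if_neg h]
        exact (hasDerivAt_const t (Inum i * lam i)).congr_of_eventuallyEq (by
          filter_upwards with s; rw [hupd]; simp [h])
    have hsum := HasDerivAt.fun_sum this
    simpa using hsum
  -- piece 2
  have h2 : HasDerivAt (fun s : ℝ => ∑ i, ∑ j, Gfun (Function.update lam k s i - Function.update lam k s j))
      (2 * ∑ l, (if l = k then 0 else Real.arctan (t - lam l))) t := by
    have key : ∀ i ∈ (univ : Finset (Fin N)), HasDerivAt
        (fun s : ℝ => ∑ j, Gfun (Function.update lam k s i - Function.update lam k s j))
        (∑ j, ((if i = k then (if j = k then 0 else Real.arctan (t - lam j)) else 0)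
          + (if j = k then (if i = k then 0 else Real.arctan (t - lam i)) else 0))) t := by
      intro i _
      apply HasDerivAt.fun_sum
      intro j _
      have hfun : (fun s : ℝ => Gfun (Function.update lam k s i - Function.update lam k s j))
          = fun s => Gfun ((if i = k then s else lam i) - (if j = k then s else lam j)) := by
        funext s; rw [hupd, hupd]
      rw [hfun]
      by_cases hi : i = k <;> by_cases hj : j = k
      · simp only [hi, hj, if_pos rfl, sub_self]
        exact (hasDerivAt_const t (Gfun 0)).congr_of_eventuallyEq (by
          filter_upwards with s; simp) |>.congr_deriv (by simp)
      · simp only [hi, if_pos rfl, if_neg hj]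
        have : HasDerivAt (fun s : ℝ => Gfun (s - lam j)) (Real.arctan (t - lam j)) t := by
          have hin : HasDerivAt (fun s : ℝ => s - lam j) 1 t := (hasDerivAt_id t).sub_const _
          simpa [Function.comp_def] using (hasDerivAt_Gfun (t - lam j)).comp t hin
        exact this.congr_deriv (by simp [hj])
      · simp only [if_neg hi, hj, if_pos rfl]
        have : HasDerivAt (fun s : ℝ => Gfun (lam i - s)) (-Real.arctan (lam i - t)) t := by
          have hin : HasDerivAt (fun s : ℝ => lam i - s) (-1) t := (hasDerivAt_id t).const_sub _
          simpa [Function.comp_def] using (hasDerivAt_Gfun (lam i - t)).comp t hin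
        exact this.congr_deriv (by
          rw [← neg_sub t (lam i), Real.arctan_neg]
          simp)
      · simp only [if_neg hi, if_neg hj]
        exact (hasDerivAt_const t (Gfun (lam i - lam j))).congr_deriv (by simp [hi, hj])
    have hsum := HasDerivAt.sum key
    have e1 : ∀ (X : Fin N → ℝ), (∑ i, ∑ j, (if i = k then X j else 0)) = ∑ j, X j := by
      intro X
      rw [Finset.sum_eq_single k]
      · simp
      · intro b _ hb; simp [hb]
      · simp
    have hval : (∑ i, ∑ j, ((if i = k then (if j = k then 0 else Real.arctan (t - lam j)) else 0)
          + (if j = k then (if i = k then 0 else Real.arctan (t - lam i)) else 0)))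
        = 2 * ∑ l, (if l = k then 0 else Real.arctan (t - lam l)) := by
      rw [Finset.sum_congr rfl (fun i _ => Finset.sum_add_distrib), Finset.sum_add_distrib]
      rw [e1 (fun j => if j = k then 0 else Real.arctan (t - lam j))]
      rw [Finset.sum_comm (f := fun i j => (if j = k then (if i = k then 0 else Real.arctan (t - lam i)) else 0))]
      rw [e1 (fun i => if i = k then 0 else Real.arctan (t - lam i))]
      ring
    exact (HasDerivAt.fun_sum key).congr_deriv hval
  -- assemble
  have hcomb := ((h1.const_mul (L:ℝ)).add (h2.div_const 2)).sub (h3.const_mul π)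
  have : (fun s => BFun L N Inum (Function.update lam k s))
      = fun s => (L:ℝ) * ∑ i, Gfun (Function.update lam k s i)
        + (∑ i, ∑ j, Gfun (Function.update lam k s i - Function.update lam k s j)) / 2
        - π * ∑ i, Inum i * Function.update lam k s i := by
    funext s; rfl
  rw [this]
  exact hcomb.congr_deriv (by ring)

lemma continuous_BFun (L N : ℕ) (Inum : Fin N → ℝ) : Continuous (BFun L N Inum) := by
  unfold BFun
  apply Continuous.sub
  · apply Continuous.add
    · exact continuous_const.mul (continuous_finset_sum _ fun k _ =>
        continuous_Gfun.comp (continuous_apply k))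
    · exact (continuous_finset_sum _ fun k _ => continuous_finset_sum _ fun l _ =>
        continuous_Gfun.comp ((continuous_apply k).sub (continuous_apply l))).div_const 2
  · exact continuous_const.mul (continuous_finset_sum _ fun k _ =>
      continuous_const.mul (continuous_apply k))

lemma BFun_lower(L N : ℕ) (Inum : Fin N → ℝ) (ε : ℝ) (hε : 0 < ε)
    (hkey : ∀ v : Fin N → ℝ, ∑ k, Inum k * v k
      ≤ ((L:ℝ)/2 - ε) * ∑ k, |v k| + (1/4) * ∑ k, ∑ l, |v k - v l|) :
    ∃ C : ℝ, ∀ lam : Fin N → ℝ,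
      π * ε / 2 * (∑ k, |lam k|) - C ≤ BFun L N Inum lam := by
  have hπ : (0:ℝ) < π := Real.pi_pos
  set a : ℝ := max 1 (2 * ((L:ℝ) + N) / (π * ε)) with ha_def
  have ha1 : (1:ℝ) ≤ a := le_max_left _ _
  have ha0 : (0:ℝ) < a := by linarith
  have haB : ((L:ℝ) + N) / a ≤ π * ε / 2 := by
    have h2 : 2 * ((L:ℝ) + N) / (π * ε) ≤ a := le_max_right _ _
    have hpe : (0:ℝ) < π * ε := by positivity
    rw [div_le_iff₀ ha0]
    rw [div_le_iff₀ hpe] at h2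
    have hLN : (0:ℝ) ≤ (L:ℝ) + N := by positivity
    nlinarith
  set c : ℝ := 1 + Real.log a with hc_def
  have hc0 : 0 ≤ c := by
    have := Real.log_nonneg ha1
    simp [hc_def]; linarith
  refine ⟨(L:ℝ) * N * c + (L:ℝ) * N / a + (N:ℝ)^2 * c / 2 + (N:ℝ)^2 / (2*a), ?_⟩
  intro lam
  set S : ℝ := ∑ k, |lam k| with hS_def
  set T : ℝ := ∑ k, ∑ l, |lam k - lam l| with hT_def
  have hS0 : 0 ≤ S := Finset.sum_nonneg fun k _ => abs_nonneg _
  have hT0 : 0 ≤ T := Finset.sum_nonneg fun k _ => Finset.sum_nonneg fun l _ => abs_nonneg _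
  have hconst : ∀ b : ℝ, ∑ _k : Fin N, b = (N:ℝ) * b := by
    intro b; simp [Finset.sum_const, Finset.card_univ, nsmul_eq_mul]
  have hconst2 : ∀ b : ℝ, ∑ _k : Fin N, ∑ _l : Fin N, b = (N:ℝ)^2 * b := by
    intro b; rw [Finset.sum_congr rfl fun k _ => hconst b, hconst ((N:ℝ)*b)]; ring
  have hmul : ∀ (b : ℝ) (f : Fin N → ℝ), ∑ k : Fin N, b * f k = b * ∑ k, f k := by
    intro b f; rw [Finset.mul_sum]
  have hmul2 : ∀ (b : ℝ) (f : Fin N → Fin N → ℝ),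
      ∑ k : Fin N, ∑ l : Fin N, b * f k l = b * ∑ k, ∑ l, f k l := by
    intro b f
    rw [Finset.sum_congr rfl fun k _ => hmul b (f k), hmul b (fun k => ∑ l, f k l)]
  have hTS : T ≤ 2 * N * S := by
    have h1 : T ≤ ∑ k, ∑ l, (|lam k| + |lam l|) :=
      Finset.sum_le_sum fun k _ => Finset.sum_le_sum fun l _ => abs_sub _ _
    have h2 : ∑ k : Fin N, ∑ l : Fin N, (|lam k| + |lam l|) = 2 * N * S := by
      have e : ∀ k : Fin N, ∑ l : Fin N, (|lam k| + |lam l|) = (N:ℝ) * |lam k| + S := by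
        intro k; rw [Finset.sum_add_distrib, hconst, ← hS_def]
      rw [Finset.sum_congr rfl fun k _ => e k, Finset.sum_add_distrib,
        hmul (N:ℝ) (fun k => |lam k|), ← hS_def, hconst S]
      ring
    linarith
  have hG1 : π / 2 * S - (N:ℝ) * c - ((N:ℝ) + S) / a ≤ ∑ k, Gfun (lam k) := by
    have h1 : ∑ k, (π / 2 * |lam k| - c - (1 + |lam k|) / a) ≤ ∑ k, Gfun (lam k) :=
      Finset.sum_le_sum fun k _ => Gfun_lower ha1 _
    have h2 : ∑ k, (π / 2 * |lam k| - c - (1 + |lam k|) / a)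
        = π / 2 * S - (N:ℝ) * c - ((N:ℝ) + S) / a := by
      rw [Finset.sum_sub_distrib, Finset.sum_sub_distrib, hmul (π/2) (fun k => |lam k|),
        ← hS_def, hconst c, ← Finset.sum_div, Finset.sum_add_distrib, hconst 1, mul_one,
        ← hS_def]
    linarith
  have hG2 : π / 2 * T - (N:ℝ)^2 * c - ((N:ℝ)^2 + T) / a ≤ ∑ k, ∑ l, Gfun (lam k - lam l) := by
    have h1 : ∑ k, ∑ l, (π / 2 * |lam k - lam l| - c - (1 + |lam k - lam l|) / a)
        ≤ ∑ k, ∑ l, Gfun (lam k - lam l) :=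
      Finset.sum_le_sum fun k _ => Finset.sum_le_sum fun l _ => Gfun_lower ha1 _
    have h2 : ∑ k, ∑ l, (π / 2 * |lam k - lam l| - c - (1 + |lam k - lam l|) / a)
        = π / 2 * T - (N:ℝ)^2 * c - ((N:ℝ)^2 + T) / a := by
      have e : ∀ k : Fin N, ∑ l : Fin N, (π / 2 * |lam k - lam l| - c - (1 + |lam k - lam l|) / a)
          = ∑ l : Fin N, (π / 2 * |lam k - lam l|) - (N:ℝ) * c
            - ((N:ℝ) + ∑ l : Fin N, |lam k - lam l|) / a := by
        intro k
        rw [Finset.sum_sub_distrib, Finset.sum_sub_distrib, hconst c, ← Finset.sum_div,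
          Finset.sum_add_distrib, hconst 1, mul_one]
      rw [Finset.sum_congr rfl fun k _ => e k, Finset.sum_sub_distrib, Finset.sum_sub_distrib,
        hmul2 (π/2) (fun k l => |lam k - lam l|), ← hT_def, hconst ((N:ℝ)*c),
        ← Finset.sum_div, Finset.sum_add_distrib, hconst (N:ℝ), ← hT_def]
      ring
    linarith
  have hD : ∑ k, Inum k * lam k ≤ ((L:ℝ)/2 - ε) * S + (1/4) * T := hkey lam
  have hL0 : (0:ℝ) ≤ L := Nat.cast_nonneg L
  have hLA := mul_le_mul_of_nonneg_left hG1 hL0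
  have hG2half : (π / 2 * T - (N:ℝ)^2 * c - ((N:ℝ)^2 + T) / a) / 2
      ≤ (∑ k, ∑ l, Gfun (lam k - lam l)) / 2 := by linarith
  have hπD := mul_le_mul_of_nonneg_left hD hπ.le
  have hTa : T / (2 * a) ≤ (N:ℝ) * S / a := by
    rw [div_le_div_iff₀ (by positivity) ha0]
    nlinarith
  have hLNa : (L:ℝ) * S / a + (N:ℝ) * S / a ≤ π * ε / 2 * S := by
    have h := mul_le_mul_of_nonneg_right haB hS0
    have h2 : ((L:ℝ) + N) / a * S = (L:ℝ) * S / a + (N:ℝ) * S / a := by ring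
    linarith
  show π * ε / 2 * S - _ ≤ (L:ℝ) * ∑ k, Gfun (lam k)
      + (∑ k, ∑ l, Gfun (lam k - lam l)) / 2 - π * ∑ k, Inum k * lam k
  have harith : (L:ℝ) * (π / 2 * S - (N:ℝ) * c - ((N:ℝ) + S) / a)
      + (π / 2 * T - (N:ℝ)^2 * c - ((N:ℝ)^2 + T) / a) / 2
      - π * (((L:ℝ)/2 - ε) * S + (1/4) * T)
      ≥ π * ε / 2 * S
        - ((L:ℝ) * N * c + (L:ℝ) * N / a + (N:ℝ)^2 * c / 2 + (N:ℝ)^2 / (2*a)) := by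
    have expand1 : (L:ℝ) * (π / 2 * S - (N:ℝ) * c - ((N:ℝ) + S) / a)
        + (π / 2 * T - (N:ℝ)^2 * c - ((N:ℝ)^2 + T) / a) / 2
        - π * (((L:ℝ)/2 - ε) * S + (1/4) * T)
        = π * ε * S - (L:ℝ) * S / a - T / (2*a)
          - ((L:ℝ) * N * c + (L:ℝ) * N / a + (N:ℝ)^2 * c / 2 + (N:ℝ)^2 / (2*a)) := by
      field_simp
      ring
    rw [expand1]
    linarith
  linarith [hLA, hG2half, hπD, harith]

lemma gap_lemma{N : ℕ} (Inum : Fin N → ℝ) (hmono : StrictMono Inum)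
    (hdiff : ∀ k l, ∃ n : ℤ, Inum k - Inum l = n) :
    ∀ (m : ℕ) (j k : Fin N), (k:ℕ) = (j:ℕ) + m → (m:ℝ) ≤ Inum k - Inum j := by
  intro m
  induction m with
  | zero =>
    intro j k h
    have : j = k := Fin.ext (by omega)
    subst this; simp
  | succ m ih =>
    intro j k h
    have hjm : (j:ℕ) + m < N := by have := k.isLt; omega
    set j' : Fin N := ⟨(j:ℕ) + m, hjm⟩ with hj'
    have h1 : (m:ℝ) ≤ Inum j' - Inum j := ih j j' rfl
    have hlt : j' < k := by rw [Fin.lt_def]; simp [hj']; omega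
    have h2 : (1:ℝ) ≤ Inum k - Inum j' := by
      obtain ⟨n, hn⟩ := hdiff k j'
      have hpos : (0:ℝ) < Inum k - Inum j' := sub_pos.2 (hmono hlt)
      have hn0 : (0:ℝ) < (n:ℝ) := by rw [← hn]; exact hpos
      have : (0:ℤ) < n := by exact_mod_cast hn0
      have : (1:ℤ) ≤ n := this
      calc (1:ℝ) ≤ (n:ℝ) := by exact_mod_cast this
      _ = _ := hn.symm
    push_cast
    linarith

lemma key_bound (L N : ℕ) (hL : 0 < L) (hN : 0 < N)
    (Inum : Fin N → ℝ) (hmono : StrictMono Inum)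
    (hdiff : ∀ k l, ∃ n : ℤ, Inum k - Inum l = n)
    (hbound : ∀ k, -(((L : ℝ) + N - 1) / 2) < Inum k ∧
      Inum k < ((L : ℝ) + N - 1) / 2) :
    ∃ ε : ℝ, 0 < ε ∧ ∀ v : Fin N → ℝ, ∑ k, Inum k * v k
      ≤ ((L:ℝ)/2 - ε) * ∑ k, |v k| + (1/4) * ∑ k, ∑ l, |v k - v l| := by
  set J : Fin N → ℝ := fun k => Inum k - (2 * (k:ℕ) + 1 - (N:ℝ)) / 2 with hJ_def
  have hJ : ∀ k, |J k| < (L:ℝ) / 2 := by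
    intro k
    have hkN : (k:ℕ) < N := k.isLt
    -- upper bound
    have hupper : Inum k < ((L : ℝ) + N - 1) / 2 - ((N:ℝ) - 1 - k) := by
      set kN : Fin N := ⟨N - 1, by omega⟩ with hkN_def
      have hgap : ((N - 1 - (k:ℕ) : ℕ) : ℝ) ≤ Inum kN - Inum k :=
        gap_lemma Inum hmono hdiff (N - 1 - k) k kN (by simp [hkN_def]; omega)
      have hcast : ((N - 1 - (k:ℕ) : ℕ) : ℝ) = (N:ℝ) - 1 - k := by
        rw [Nat.cast_sub (by omega), Nat.cast_sub (by omega)]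
        push_cast; ring
      have hb := (hbound kN).2
      rw [hcast] at hgap
      linarith
    have hlower : -(((L : ℝ) + N - 1) / 2) + (k:ℕ) < Inum k := by
      set k0 : Fin N := ⟨0, hN⟩ with hk0_def
      have hgap : ((k:ℕ) : ℝ) ≤ Inum k - Inum k0 :=
        gap_lemma Inum hmono hdiff k k0 k (by simp [hk0_def])
      have hb := (hbound k0).1
      linarith
    rw [abs_lt]
    constructor
    · simp only [hJ_def]
      push_cast
      linarith
    · simp only [hJ_def]
      push_cast
      linarith
  obtain ⟨k₀, -, hk₀⟩ := Finset.exists_max_image (univ : Finset (Fin N))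
    (fun k => |J k|) ⟨⟨0, hN⟩, Finset.mem_univ _⟩
  refine ⟨(L:ℝ)/2 - |J k₀|, by linarith [hJ k₀], ?_⟩
  intro v
  have hsplit : ∑ k, Inum k * v k
      = ∑ k, J k * v k + ∑ k : Fin N, (2 * (k:ℕ) + 1 - (N:ℝ)) / 2 * v k := by
    rw [← Finset.sum_add_distrib]
    refine Finset.sum_congr rfl fun k _ => ?_
    simp only [hJ_def]; ring
  have h1 : ∑ k, J k * v k ≤ ((L:ℝ)/2 - ((L:ℝ)/2 - |J k₀|)) * ∑ k, |v k| := by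
    have : ((L:ℝ)/2 - ((L:ℝ)/2 - |J k₀|)) = |J k₀| := by ring
    rw [this, Finset.mul_sum]
    refine Finset.sum_le_sum fun k _ => ?_
    calc J k * v k ≤ |J k * v k| := le_abs_self _
    _ = |J k| * |v k| := abs_mul _ _
    _ ≤ |J k₀| * |v k| := mul_le_mul_of_nonneg_right (hk₀ k (Finset.mem_univ k)) (abs_nonneg _)
  have h2 := half_sgn_bound v
  rw [hsplit]
  linarith


lemma bethe_unique (L N : ℕ) (hL : 0 < L) (Inum : Fin N → ℝ)
    (lam mu : Fin N → ℝ)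
    (hlam : ∀ k, (L:ℝ) * Real.arctan (lam k) + ∑ l, Real.arctan (lam k - lam l) = π * Inum k)
    (hmu : ∀ k, (L:ℝ) * Real.arctan (mu k) + ∑ l, Real.arctan (mu k - mu l) = π * Inum k) :
    mu = lam := by
  have hL' : (0:ℝ) < L := by exact_mod_cast hL
  have hzero : (L:ℝ) * ∑ k, (Real.arctan (mu k) - Real.arctan (lam k)) * (mu k - lam k)
      + ∑ k, ∑ l, (Real.arctan (mu k - mu l) - Real.arctan (lam k - lam l)) * (mu k - lam k)
      = 0 := by
    rw [Finset.mul_sum, ← Finset.sum_add_distrib]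
    apply Finset.sum_eq_zero
    intro k _
    have h1 := hlam k
    have h2 := hmu k
    have e1 : ∑ l, (Real.arctan (mu k - mu l) - Real.arctan (lam k - lam l)) * (mu k - lam k)
        = (∑ l, (Real.arctan (mu k - mu l) - Real.arctan (lam k - lam l))) * (mu k - lam k) :=
      (Finset.sum_mul _ _ _).symm
    have e2 : ∑ l, (Real.arctan (mu k - mu l) - Real.arctan (lam k - lam l))
        = ∑ l, Real.arctan (mu k - mu l) - ∑ l, Real.arctan (lam k - lam l) :=
      Finset.sum_sub_distrib _ _
    rw [e1, e2]
    have e3 : ∑ l, Real.arctan (mu k - mu l) - ∑ l, Real.arctan (lam k - lam l)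
        = -((L:ℝ) * (Real.arctan (mu k) - Real.arctan (lam k))) := by linarith
    rw [e3]
    ring
  have hpair : 0 ≤ ∑ k, ∑ l,
      (Real.arctan (mu k - mu l) - Real.arctan (lam k - lam l)) * (mu k - lam k) := by
    rw [double_sum_swap (fun k l =>
      (Real.arctan (mu k - mu l) - Real.arctan (lam k - lam l)) * (mu k - lam k))]
    apply div_nonneg _ (by norm_num)
    apply Finset.sum_nonneg; intro k _
    apply Finset.sum_nonneg; intro l _
    have e1 : Real.arctan (mu l - mu k) = - Real.arctan (mu k - mu l) := by
      rw [← Real.arctan_neg, neg_sub]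
    have e2 : Real.arctan (lam l - lam k) = - Real.arctan (lam k - lam l) := by
      rw [← Real.arctan_neg, neg_sub]
    simp only [e1, e2]
    nlinarith [arctan_mul_nonneg (mu k - mu l) (lam k - lam l)]
  have hdiag : ∀ k ∈ (univ : Finset (Fin N)),
      0 ≤ (Real.arctan (mu k) - Real.arctan (lam k)) * (mu k - lam k) :=
    fun k _ => arctan_mul_nonneg _ _
  have hsum_nonneg : 0 ≤ ∑ k, (Real.arctan (mu k) - Real.arctan (lam k)) * (mu k - lam k) :=
    Finset.sum_nonneg hdiag
  have hsum_zero : ∑ k, (Real.arctan (mu k) - Real.arctan (lam k)) * (mu k - lam k) = 0 := by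
    nlinarith
  funext k
  by_contra hne
  have h1 : 0 < (Real.arctan (mu k) - Real.arctan (lam k)) * (mu k - lam k) :=
    arctan_mul_pos hne
  have h2 := (Finset.sum_eq_zero_iff_of_nonneg hdiag).1 hsum_zero k (Finset.mem_univ k)
  exact absurd h2 (ne_of_gt h1)

/-- For distinct (half-)integer Bethe numbers in the admissible range, there exists a
unique solution of the logarithmic Bethe equations. -/
theorem bethe_existence_uniqueness (L N : ℕ) (hL : 0 < L) (hN : 0 < N)
    (Inum : Fin N → ℝ) (hmono : StrictMono Inum)
    (hhalf : ∀ k, ∃ n : ℤ, 2 * Inum k = n)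
    (hdiff : ∀ k l, ∃ n : ℤ, Inum k - Inum l = n)
    (hbound : ∀ k, -(((L : ℝ) + N - 1) / 2) < Inum k ∧
      Inum k < ((L : ℝ) + N - 1) / 2) :
    ∃! lam : Fin N → ℝ, ∀ k, (1 / π) * arctan (lam k) =
      Inum k / L - (1 / (π * L)) * ∑ l, arctan (lam k - lam l) := by
  have hπ : (0:ℝ) < π := Real.pi_pos
  have hL' : (0:ℝ) < L := by exact_mod_cast hL
  have hπL : π * (L:ℝ) ≠ 0 := by positivity
  -- equivalence with the multiplied-out form of the equations
  have hiff : ∀ (lam : Fin N → ℝ) (k : Fin N),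
      ((1 / π) * arctan (lam k) = Inum k / L - (1 / (π * L)) * ∑ l, arctan (lam k - lam l))
      ↔ ((L:ℝ) * Real.arctan (lam k) + ∑ l, Real.arctan (lam k - lam l) = π * Inum k) := by
    intro lam k
    set A := Real.arctan (lam k)
    set S := ∑ l, Real.arctan (lam k - lam l)
    constructor
    · intro h
      have h2 := congrArg (fun x => (π * (L:ℝ)) * x) h
      rw [mul_sub] at h2
      rw [show (π * (L:ℝ)) * ((1/π) * A) = (L:ℝ) * A by field_simp,
        show (π * (L:ℝ)) * (Inum k / L) = π * Inum k by field_simp,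
        show (π * (L:ℝ)) * ((1 / (π * L)) * S) = S by field_simp] at h2
      linarith
    · intro h
      rw [show Inum k / L - (1 / (π * (L:ℝ))) * S = (1/(π*(L:ℝ))) * (π * Inum k - S) by
        field_simp, ← h]
      field_simp
      ring
  -- existence via minimisation of the Yang-Yang action
  obtain ⟨ε, hε, hkey⟩ := key_bound L N hL hN Inum hmono hdiff hbound
  obtain ⟨C, hC⟩ := BFun_lower L N Inum ε hε hkey
  have hcont := continuous_BFun L N Inum
  set B0 : ℝ := BFun L N Inum 0 with hB0
  have hC0 : 0 ≤ B0 + C := by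
    have h := hC 0
    simp only [Pi.zero_apply, abs_zero, Finset.sum_const_zero, mul_zero, zero_sub] at h
    linarith
  set R : ℝ := (B0 + C) / (π * ε / 2) + 1 with hR
  have hR1 : 0 < R := by positivity
  obtain ⟨lam, hlammem, hmin⟩ := (isCompact_closedBall (0 : Fin N → ℝ) R).exists_isMinOn
    ⟨0, Metric.mem_closedBall_self hR1.le⟩ hcont.continuousOn
  have hlamle : BFun L N Inum lam ≤ B0 :=
    isMinOn_iff.1 hmin 0 (Metric.mem_closedBall_self hR1.le)
  have hlamsum : ∑ k, |lam k| ≤ R - 1 := by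
    have h1 := hC lam
    have h2 : π * ε / 2 * (∑ k, |lam k|) ≤ B0 + C := by linarith
    have h3 : (∑ k, |lam k|) ≤ (B0 + C) / (π * ε / 2) := by
      rw [le_div_iff₀ (by positivity)]
      nlinarith
    simp only [hR]
    linarith
  have hsum0 : (0:ℝ) ≤ ∑ k, |lam k| := Finset.sum_nonneg fun k _ => abs_nonneg _
  have hnorm : ‖lam‖ < R := by
    have hnn : (0:ℝ) ≤ R - 1 := le_trans hsum0 hlamsum
    have h4 : ‖lam‖ ≤ R - 1 := by
      apply (pi_norm_le_iff_of_nonneg hnn).2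
      intro i
      rw [Real.norm_eq_abs]
      exact le_trans (Finset.single_le_sum (f := fun k => |lam k|)
        (fun k _ => abs_nonneg _) (Finset.mem_univ i)) hlamsum
    linarith
  have hloc : IsLocalMin (BFun L N Inum) lam :=
    hmin.isLocalMin (Filter.mem_of_superset
      (Metric.isOpen_ball.mem_nhds (by
        simpa [Metric.mem_ball, dist_zero_right] using hnorm))
      Metric.ball_subset_closedBall)
  have hstat : ∀ k, (L:ℝ) * Real.arctan (lam k)
      + ∑ l, Real.arctan (lam k - lam l) = π * Inum k := by
    intro k
    have hupdc : Continuous (fun t : ℝ => Function.update lam k t) := by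
      apply continuous_pi
      intro i
      by_cases h : i = k
      · subst h
        simpa using continuous_id'
      · simpa [Function.update_of_ne h] using continuous_const
    have hloc2 : IsLocalMin (fun t => BFun L N Inum (Function.update lam k t)) (lam k) := by
      have h2 : Function.update lam k (lam k) = lam := Function.update_eq_self k lam
      have h3 : IsLocalMin (BFun L N Inum) (Function.update lam k (lam k)) := by
        rw [h2]; exact hloc
      exact h3.comp_continuous hupdc.continuousAt
    have hzero := hloc2.hasDerivAt_eq_zero (BFun_hasDerivAt L N Inum lam k (lam k))
    have hsumeq : ∑ l, (if l = k then 0 else Real.arctan (lam k - lam l))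
        = ∑ l, Real.arctan (lam k - lam l) := by
      refine Finset.sum_congr rfl fun l _ => ?_
      by_cases h : l = k
      · simp [h]
      · simp [h]
    rw [hsumeq] at hzero
    linarith
  refine ⟨lam, fun k => (hiff lam k).2 (hstat k), ?_⟩
  intro mu hmu
  exact bethe_unique L N hL Inum lam mu hstat (fun k => (hiff mu k).1 (hmu k))
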